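/- For z_1, z_2 ∈ ℤ[i] with |z_1|^2, |z_2|^2 ≤ 2N, write z_j = r_j + i s_j and Δ = Im(z_2 · conj(z_1)) = r_2 s_1 − r_1 s_2. Then for any fixed nonzero integer D, the number of pairs (z_1, z_2) with |z_1|^2, |z_2|^2 in (N, 2N] and Δ = D is at most C·N·(log N)^{O(1)}. -/

import Mathlib

open Finset

lemma count_residue_class (M m : ℕ) (hm : 0 < m) (s : Finset ℤ)
    (hs : s ⊆ Finset.Icc (-(M:ℤ)) M)
    (h : ∀ x ∈ s, ∀ y ∈ s, (m:ℤ) ∣ x - y) :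
    s.card ≤ 2*M/m + 1 := by
  have hm' : (0:ℤ) < m := by exact_mod_cast hm
  obtain ⟨q, hq⟩ : ∃ q, q = 2*M/m := ⟨_, rfl⟩
  have key : s.card ≤ (Finset.Icc (0:ℤ) (q : ℤ)).card := by
    refine Finset.card_le_card_of_injOn (fun x => (x + M) / m) ?_ ?_
    · intro x hx
      have hx' := hs hx
      simp only [Finset.mem_coe, Finset.mem_Icc] at hx' ⊢
      constructor
      · exact Int.ediv_nonneg (by linarith [hx'.1]) hm'.le
      · have hcast : ((q : ℕ) : ℤ) = ((2*M : ℕ) : ℤ) / (m:ℤ) := by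
          rw [hq]; exact_mod_cast Int.natCast_div _ _
        rw [hcast]
        apply Int.ediv_le_ediv hm'
        push_cast
        linarith [hx'.2]
    · intro x hx y hy hxy
      simp only at hxy
      have hdvd : (m:ℤ) ∣ (x + M) - (y + M) := by simpa using h x hx y hy
      have hmod : (x + M) % m = (y + M) % m :=
        Int.emod_eq_emod_iff_emod_sub_eq_zero.mpr (Int.emod_eq_zero_of_dvd hdvd)
      have e1 := Int.mul_ediv_add_emod (x + M) m
      have e2 := Int.mul_ediv_add_emod (y + M) m
      have : x + (M:ℤ) = y + M := by rw [← e1, ← e2, hxy, hmod]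
      linarith
  rw [Int.card_Icc] at key
  rw [← hq]
  omega

lemma count_linear_dvd (a b c : ℤ) (hb : b ≠ 0) (M : ℕ) :
    ((Finset.Icc (-(M:ℤ)) M).filter (fun x => b ∣ a*x - c)).card
      ≤ 2*M/(b.natAbs / Int.gcd a b) + 1 := by
  set g := Int.gcd a b with hg
  have hg0 : 0 < g := Int.gcd_pos_of_ne_zero_right a hb
  have hgz : (g:ℤ) ≠ 0 := by exact_mod_cast hg0.ne'
  have hgb : (g:ℤ) ∣ b := Int.gcd_dvd_right a b
  have hga : (g:ℤ) ∣ a := Int.gcd_dvd_left a b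
  set b' := b / (g:ℤ) with hb'
  set a' := a / (g:ℤ) with ha'
  have hbeq : b = (g:ℤ) * b' := (Int.mul_ediv_cancel' hgb).symm
  have haeq : a = (g:ℤ) * a' := (Int.mul_ediv_cancel' hga).symm
  have hb'0 : b' ≠ 0 := by
    intro h0; rw [h0, mul_zero] at hbeq; exact hb hbeq
  have hcop : Int.gcd a' b' = 1 := Int.gcd_div_gcd_div_gcd hg0
  have hnat : b.natAbs / g = b'.natAbs := by
    have : b.natAbs = g * b'.natAbs := by
      rw [hbeq, Int.natAbs_mul, Int.natAbs_natCast]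
    rw [this, Nat.mul_div_cancel_left _ hg0]
  rw [hnat]
  apply count_residue_class M b'.natAbs (Int.natAbs_pos.mpr hb'0)
  · exact Finset.filter_subset _ _
  · intro x hx y hy
    simp only [Finset.mem_filter, Finset.mem_Icc] at hx hy
    have hdvd : b ∣ a * (x - y) := by
      have := dvd_sub hx.2 hy.2
      have e : a*x - c - (a*y - c) = a * (x - y) := by ring
      rwa [e] at this
    have hdvd' : b' ∣ a' * (x - y) := by
      rw [hbeq, haeq, mul_assoc] at hdvd
      exact (mul_dvd_mul_iff_left hgz).mp hdvd
    have hco : IsCoprime b' a' := (Int.isCoprime_iff_gcd_eq_one.mpr hcop).symm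
    have : b' ∣ x - y := hco.dvd_of_dvd_mul_left hdvd'
    exact (Int.natAbs_dvd).mpr this

lemma gauss_div_helper (M g R : ℕ) (hg : 0 < g) (hgR : g ∣ R) (hR : 0 < R) (hMR : M ≤ 2*R) :
    2*M/(R/g) + 1 ≤ 5*g := by
  obtain ⟨m, hm⟩ := hgR
  have hm0 : 0 < m := by
    rcases Nat.eq_zero_or_pos m with h | h
    · subst h; omega
    · exact h
  have hRg : R / g = m := by rw [hm, Nat.mul_div_cancel_left _ hg]
  rw [hRg]
  have h1 : 2*M ≤ (4*g)*m := by
    have : (4*g)*m = 4*(g*m) := by ring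
    rw [this, ← hm]; omega
  have h2 : 2*M/m ≤ ((4*g)*m)/m := Nat.div_le_div_right h1
  rw [Nat.mul_div_cancel _ hm0] at h2
  omega

lemma fiber_bound (N M : ℕ) (hM : M*M ≤ 2*N) (D r₁ s₁ : ℤ)
    (h1 : (N:ℤ) < r₁*r₁ + s₁*s₁) :
    (((Finset.Icc (-(M:ℤ)) M) ×ˢ (Finset.Icc (-(M:ℤ)) M)).filter
        (fun p : ℤ × ℤ => p.1 * s₁ - r₁ * p.2 = D)).card ≤ 5 * Int.gcd r₁ s₁ := by
  set g := Int.gcd r₁ s₁ with hgdef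
  have habs : ∀ t : ℤ, ((t.natAbs : ℤ)) * t.natAbs = t * t := fun t => Int.natAbs_mul_self
  rcases le_or_gt |s₁| |r₁| with hcase | hcase
  · have hr0 : r₁ ≠ 0 := by
      intro h0
      rw [h0] at hcase
      simp only [abs_zero, abs_nonpos_iff] at hcase
      rw [h0, hcase] at h1
      norm_num at h1
      omega
    have hR : 0 < r₁.natAbs := Int.natAbs_pos.mpr hr0
    have hg0 : 0 < g := Int.gcd_pos_of_ne_zero_left s₁ hr0
    have hss : s₁*s₁ ≤ r₁*r₁ := by
      have := mul_self_le_mul_self (abs_nonneg s₁) hcase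
      rwa [abs_mul_abs_self, abs_mul_abs_self] at this
    have hbig : M ≤ 2 * r₁.natAbs := by
      by_contra hc
      push_neg at hc
      have hc' : (2 * r₁.natAbs : ℤ) < M := by exact_mod_cast hc
      have h2 : (2 * (r₁.natAbs:ℤ)) * (2 * r₁.natAbs) < (M:ℤ)*M :=
        mul_self_lt_mul_self (by positivity) hc'
      have h3 : (M:ℤ)*M ≤ 2*(N:ℤ) := by exact_mod_cast hM
      nlinarith [habs r₁]
    have step1 : (((Finset.Icc (-(M:ℤ)) M) ×ˢ (Finset.Icc (-(M:ℤ)) M)).filter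
        (fun p : ℤ × ℤ => p.1 * s₁ - r₁ * p.2 = D)).card
        ≤ ((Finset.Icc (-(M:ℤ)) M).filter (fun x => r₁ ∣ s₁*x - D)).card := by
      refine Finset.card_le_card_of_injOn (fun p => p.1) ?_ ?_
      · intro p hp
        simp only [Finset.mem_coe, Finset.mem_filter, Finset.mem_product] at hp
        simp only [Finset.mem_coe, Finset.mem_filter]
        refine ⟨hp.1.1, ⟨p.2, by linarith [hp.2]⟩⟩
      · intro p hp q hq hpq
        simp only [Finset.coe_filter, Set.mem_setOf_eq, Finset.mem_product] at hp hq
        simp only at hpq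
        have h2 : r₁ * p.2 = r₁ * q.2 := by
          have e1 := hp.2; have e2 := hq.2
          rw [hpq] at e1
          linarith
        exact Prod.ext hpq (mul_left_cancel₀ hr0 h2)
    have step2 := count_linear_dvd s₁ r₁ D hr0 M
    rw [Int.gcd_comm s₁ r₁, ← hgdef] at step2
    have step3 := gauss_div_helper M g r₁.natAbs hg0 (Nat.gcd_dvd_left _ _) hR hbig
    omega
  · have hs0 : s₁ ≠ 0 := by
      intro h0
      rw [h0, abs_zero] at hcase
      have := abs_nonneg r₁
      omega
    have hR : 0 < s₁.natAbs := Int.natAbs_pos.mpr hs0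
    have hg0 : 0 < g := Int.gcd_pos_of_ne_zero_right r₁ hs0
    have hss : r₁*r₁ ≤ s₁*s₁ := by
      have := mul_self_le_mul_self (abs_nonneg r₁) hcase.le
      rwa [abs_mul_abs_self, abs_mul_abs_self] at this
    have hbig : M ≤ 2 * s₁.natAbs := by
      by_contra hc
      push_neg at hc
      have hc' : (2 * s₁.natAbs : ℤ) < M := by exact_mod_cast hc
      have h2 : (2 * (s₁.natAbs:ℤ)) * (2 * s₁.natAbs) < (M:ℤ)*M :=
        mul_self_lt_mul_self (by positivity) hc'
      have h3 : (M:ℤ)*M ≤ 2*(N:ℤ) := by exact_mod_cast hM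
      nlinarith [habs s₁]
    have step1 : (((Finset.Icc (-(M:ℤ)) M) ×ˢ (Finset.Icc (-(M:ℤ)) M)).filter
        (fun p : ℤ × ℤ => p.1 * s₁ - r₁ * p.2 = D)).card
        ≤ ((Finset.Icc (-(M:ℤ)) M).filter (fun x => s₁ ∣ r₁*x - (-D))).card := by
      refine Finset.card_le_card_of_injOn (fun p => p.2) ?_ ?_
      · intro p hp
        simp only [Finset.mem_coe, Finset.mem_filter, Finset.mem_product] at hp
        simp only [Finset.mem_coe, Finset.mem_filter]
        refine ⟨hp.1.2, ⟨p.1, by linarith [hp.2]⟩⟩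
      · intro p hp q hq hpq
        simp only [Finset.coe_filter, Set.mem_setOf_eq, Finset.mem_product] at hp hq
        simp only at hpq
        have h2 : p.1 * s₁ = q.1 * s₁ := by
          have e1 := hp.2; have e2 := hq.2
          rw [hpq] at e1
          linarith
        exact Prod.ext (mul_right_cancel₀ hs0 h2) hpq
    have step2 := count_linear_dvd r₁ s₁ (-D) hs0 M
    rw [← hgdef] at step2
    have step3 := gauss_div_helper M g s₁.natAbs hg0 (Nat.gcd_dvd_right _ _) hR hbig
    omega

lemma count_multiples (M d : ℕ) (hd : 0 < d) :
    ((Finset.Icc (-(M:ℤ)) M).filter (fun x => (d:ℤ) ∣ x)).card ≤ 2*(M/d) + 2 := by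
  have h1 : ((Finset.Icc (-(M:ℤ)) M).filter (fun x => (d:ℤ) ∣ x)).card ≤ 2*M/d + 1 := by
    apply count_residue_class M d hd
    · exact Finset.filter_subset _ _
    · intro x hx y hy
      simp only [Finset.mem_filter] at hx hy
      exact dvd_sub hx.2 hy.2
  have h2 : 2*M/d ≤ 2*(M/d) + 1 := by
    rw [Nat.div_le_iff_le_mul_add_pred hd]
    have e1 := Nat.div_add_mod M d
    have e2 := Nat.mod_lt M hd
    have e3 : d * (2*(M/d)+1) = 2*(d*(M/d)) + d := by ring
    omega
  omega

lemma gcd_le_sum_divisors (M : ℕ) (r s : ℤ) (h0 : r ≠ 0 ∨ s ≠ 0)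
    (hr : r.natAbs ≤ M) (hs : s.natAbs ≤ M) :
    Int.gcd r s ≤ ∑ d ∈ (Finset.Icc 1 M).filter (fun d : ℕ => (d:ℤ) ∣ r ∧ (d:ℤ) ∣ s), d := by
  set g := Int.gcd r s with hg
  have hg0 : 0 < g := Int.gcd_pos_iff.mpr h0
  have hgM : g ≤ M := by
    rcases h0 with h | h
    · exact le_trans (Nat.le_of_dvd (Int.natAbs_pos.mpr h) (Nat.gcd_dvd_left _ _)) hr
    · exact le_trans (Nat.le_of_dvd (Int.natAbs_pos.mpr h) (Nat.gcd_dvd_right _ _)) hs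
  calc g = ∑ d ∈ g.divisors, Nat.totient d := (Nat.sum_totient g).symm
    _ ≤ ∑ d ∈ g.divisors, d := Finset.sum_le_sum (fun d _ => Nat.totient_le d)
    _ ≤ ∑ d ∈ (Finset.Icc 1 M).filter (fun d : ℕ => (d:ℤ) ∣ r ∧ (d:ℤ) ∣ s), d := by
      apply Finset.sum_le_sum_of_subset
      intro d hd
      rw [Nat.mem_divisors] at hd
      obtain ⟨hdg, _⟩ := hd
      have hd1 : 1 ≤ d := Nat.pos_of_dvd_of_pos hdg hg0
      have hdM : d ≤ M := le_trans (Nat.le_of_dvd hg0 hdg) hgM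
      have hdz : (d:ℤ) ∣ (g:ℤ) := Int.natCast_dvd_natCast.mpr hdg
      refine Finset.mem_filter.mpr ⟨Finset.mem_Icc.mpr ⟨hd1, hdM⟩,
        dvd_trans hdz (Int.gcd_dvd_left r s), dvd_trans hdz (Int.gcd_dvd_right r s)⟩

lemma sum_gcd_bound (N M : ℕ) :
    ∑ w ∈ (((Finset.Icc (-(M:ℤ)) M) ×ˢ (Finset.Icc (-(M:ℤ)) M)).filter
        (fun w : ℤ×ℤ => (N:ℤ) < w.1*w.1 + w.2*w.2)),
      Int.gcd w.1 w.2 ≤ 16*M * ∑ d ∈ Finset.Icc 1 M, (M/d) := by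
  set box1 := Finset.Icc (-(M:ℤ)) M with hbox1
  set boxN := (box1 ×ˢ box1).filter (fun w : ℤ×ℤ => (N:ℤ) < w.1*w.1 + w.2*w.2) with hboxN
  calc ∑ w ∈ boxN, Int.gcd w.1 w.2
      ≤ ∑ w ∈ boxN, ∑ d ∈ (Finset.Icc 1 M).filter
          (fun d : ℕ => (d:ℤ) ∣ w.1 ∧ (d:ℤ) ∣ w.2), d := by
        apply Finset.sum_le_sum
        intro w hw
        simp only [hboxN, Finset.mem_filter, Finset.mem_product, hbox1, Finset.mem_Icc] at hw
        obtain ⟨⟨⟨h11, h12⟩, h21, h22⟩, hN⟩ := hw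
        apply gcd_le_sum_divisors
        · by_contra hc
          push_neg at hc
          rw [hc.1, hc.2] at hN
          norm_num at hN
          omega
        · omega
        · omega
    _ = ∑ w ∈ boxN, ∑ d ∈ Finset.Icc 1 M,
          if (d:ℤ) ∣ w.1 ∧ (d:ℤ) ∣ w.2 then d else 0 := by
        simp_rw [Finset.sum_filter]
    _ = ∑ d ∈ Finset.Icc 1 M, ∑ w ∈ boxN,
          if (d:ℤ) ∣ w.1 ∧ (d:ℤ) ∣ w.2 then d else 0 := Finset.sum_comm
    _ ≤ ∑ d ∈ Finset.Icc 1 M, ∑ w ∈ box1 ×ˢ box1,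
          if (d:ℤ) ∣ w.1 ∧ (d:ℤ) ∣ w.2 then d else 0 := by
        refine Finset.sum_le_sum fun d _ => ?_
        refine Finset.sum_le_sum_of_subset_of_nonneg (Finset.filter_subset _ _) ?_
        intros
        positivity
    _ ≤ ∑ d ∈ Finset.Icc 1 M, 16*M*(M/d) := by
        refine Finset.sum_le_sum fun d hd => ?_
        rw [Finset.mem_Icc] at hd
        obtain ⟨hd1, hdM⟩ := hd
        rw [← Finset.sum_filter, Finset.sum_const, smul_eq_mul]
        have hprod : (box1 ×ˢ box1).filter (fun w : ℤ×ℤ => (d:ℤ) ∣ w.1 ∧ (d:ℤ) ∣ w.2)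
            = (box1.filter (fun x => (d:ℤ) ∣ x)) ×ˢ (box1.filter (fun x => (d:ℤ) ∣ x)) :=
          Finset.filter_product _ _
        rw [hprod, Finset.card_product]
        set c := (box1.filter (fun x => (d:ℤ) ∣ x)).card with hc
        have hcb : c ≤ 2*(M/d) + 2 := count_multiples M d hd1
        have hx1 : 1 ≤ M/d := (Nat.one_le_div_iff hd1).mpr hdM
        have hxd : (M/d)*d ≤ M := Nat.div_mul_le_self M d
        have h4 : c ≤ 4*(M/d) := by omega
        calc c * c * d ≤ (4*(M/d)) * (4*(M/d)) * d :=
              Nat.mul_le_mul (Nat.mul_le_mul h4 h4) le_rfl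
          _ = 16 * ((M/d) * ((M/d)*d)) := by ring
          _ ≤ 16 * ((M/d) * M) := by
              exact Nat.mul_le_mul le_rfl (Nat.mul_le_mul le_rfl hxd)
          _ = 16*M*(M/d) := by ring
    _ = 16*M * ∑ d ∈ Finset.Icc 1 M, (M/d) := by rw [Finset.mul_sum]

lemma sum_nat_div_le (M : ℕ) : ((∑ d ∈ Finset.Icc 1 M, M/d : ℕ) : ℝ) ≤ M * (1 + Real.log M) := by
  have h1 : ((∑ d ∈ Finset.Icc 1 M, M/d : ℕ) : ℝ) = ∑ d ∈ Finset.Icc 1 M, ((M/d : ℕ) : ℝ) := by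
    push_cast
    rfl
  rw [h1]
  calc ∑ d ∈ Finset.Icc 1 M, ((M/d : ℕ) : ℝ)
      ≤ ∑ d ∈ Finset.Icc 1 M, (M:ℝ)/d := Finset.sum_le_sum fun d _ => Nat.cast_div_le
    _ = (M:ℝ) * ∑ d ∈ Finset.Icc 1 M, ((d:ℝ))⁻¹ := by
        rw [Finset.mul_sum]
        exact Finset.sum_congr rfl fun d _ => (div_eq_mul_inv _ _)
    _ = (M:ℝ) * ((harmonic M : ℚ) : ℝ) := by
        congr 1
        rw [harmonic_eq_sum_Icc]
        push_cast
        rfl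
    _ ≤ (M:ℝ) * (1 + Real.log M) := by
        apply mul_le_mul_of_nonneg_left (harmonic_le_one_add_log M) (Nat.cast_nonneg M)

/-- The number of pairs of Gaussian integers `z₁, z₂` with `|z₁|², |z₂|² ∈ (N, 2N]`
and `Δ = Im(z₂ · conj z₁) = r₂s₁ − r₁s₂` equal to a fixed nonzero `D` is
`≤ C·N·(log N)^{O(1)}`. -/
theorem gaussian_pairs_fixed_delta_count :
    ∃ C : ℝ, 0 < C ∧ ∃ K : ℕ, ∀ N : ℕ, 2 ≤ N → ∀ D : ℤ, D ≠ 0 →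
      (Nat.card {z : GaussianInt × GaussianInt |
          (N : ℤ) < Zsqrtd.norm z.1 ∧ Zsqrtd.norm z.1 ≤ 2 * N ∧
          (N : ℤ) < Zsqrtd.norm z.2 ∧ Zsqrtd.norm z.2 ≤ 2 * N ∧
          Zsqrtd.re z.2 * Zsqrtd.im z.1 - Zsqrtd.re z.1 * Zsqrtd.im z.2 = D} : ℝ)
        ≤ C * N * (Real.log N) ^ K := by
  refine ⟨480, by norm_num, 1, fun N hN D _hD => ?_⟩
  set M := Nat.sqrt (2*N) with hMdef
  have hM : M*M ≤ 2*N := by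
    have := Nat.sqrt_le' (2*N)
    rwa [pow_two] at this
  have hM2 : 2 ≤ M := by
    rw [hMdef, Nat.le_sqrt]
    omega
  set box1 := Finset.Icc (-(M:ℤ)) M with hbox1
  set box := box1 ×ˢ box1 with hbox
  set F := (box ×ˢ box).filter
      (fun p : (ℤ×ℤ)×(ℤ×ℤ) => (N:ℤ) < p.1.1*p.1.1 + p.1.2*p.1.2 ∧
        p.2.1*p.1.2 - p.1.1*p.2.2 = D) with hF
  set G := F.image (fun p : (ℤ×ℤ)×(ℤ×ℤ) =>
      ((⟨p.1.1, p.1.2⟩ : GaussianInt), (⟨p.2.1, p.2.2⟩ : GaussianInt))) with hG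
  have hnorm : ∀ z : GaussianInt, z.norm = z.re*z.re + z.im*z.im := by
    intro z
    rw [Zsqrtd.norm_def]
    ring
  have hcoord : ∀ t : ℤ, t*t ≤ 2*(N:ℤ) → t.natAbs ≤ M := by
    intro t ht
    rw [hMdef, Nat.le_sqrt]
    have h1 : (t.natAbs * t.natAbs : ℤ) = t*t := Int.natAbs_mul_self
    have h2 : (t.natAbs * t.natAbs : ℤ) ≤ ((2*N : ℕ) : ℤ) := by
      rw [h1]; push_cast; linarith
    exact_mod_cast h2
  have hsub : {z : GaussianInt × GaussianInt |
      (N : ℤ) < Zsqrtd.norm z.1 ∧ Zsqrtd.norm z.1 ≤ 2 * N ∧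
      (N : ℤ) < Zsqrtd.norm z.2 ∧ Zsqrtd.norm z.2 ≤ 2 * N ∧
      Zsqrtd.re z.2 * Zsqrtd.im z.1 - Zsqrtd.re z.1 * Zsqrtd.im z.2 = D} ⊆ ↑G := by
    rintro ⟨z₁, z₂⟩ ⟨ha, hb, hc, hd, he⟩
    simp only [hG, Finset.coe_image, Set.mem_image, Finset.mem_coe]
    refine ⟨((z₁.re, z₁.im), (z₂.re, z₂.im)), ?_, rfl⟩
    rw [hnorm] at ha hb hc hd
    have m11 := hcoord z₁.re (by nlinarith [mul_self_nonneg z₁.im])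
    have m12 := hcoord z₁.im (by nlinarith [mul_self_nonneg z₁.re])
    have m21 := hcoord z₂.re (by nlinarith [mul_self_nonneg z₂.im])
    have m22 := hcoord z₂.im (by nlinarith [mul_self_nonneg z₂.re])
    simp only [hF, Finset.mem_filter, hbox, Finset.mem_product, hbox1, Finset.mem_Icc]
    refine ⟨⟨⟨⟨?_, ?_⟩, ?_, ?_⟩, ⟨?_, ?_⟩, ?_, ?_⟩, ha, he⟩ <;> omega
  have hB : (Nat.card {z : GaussianInt × GaussianInt |
      (N : ℤ) < Zsqrtd.norm z.1 ∧ Zsqrtd.norm z.1 ≤ 2 * N ∧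
      (N : ℤ) < Zsqrtd.norm z.2 ∧ Zsqrtd.norm z.2 ≤ 2 * N ∧
      Zsqrtd.re z.2 * Zsqrtd.im z.1 - Zsqrtd.re z.1 * Zsqrtd.im z.2 = D}) ≤ F.card := by
    calc Nat.card _ ≤ Nat.card ↑G := Nat.card_mono (G.finite_toSet) hsub
      _ = G.card := Nat.card_eq_finsetCard G
      _ ≤ F.card := Finset.card_image_le
  set boxN := box.filter (fun w : ℤ×ℤ => (N:ℤ) < w.1*w.1 + w.2*w.2) with hboxN
  have hC : F.card ≤ 80 * M * ∑ d ∈ Finset.Icc 1 M, (M/d) := by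
    have hfib : F.card = ∑ w ∈ boxN, (F.filter (fun p => p.1 = w)).card := by
      apply Finset.card_eq_sum_card_fiberwise
      intro p hp
      simp only [hF, Finset.mem_coe, Finset.mem_filter] at hp
      simp only [hboxN, Finset.mem_coe, Finset.mem_filter]
      exact ⟨(Finset.mem_product.mp hp.1).1, hp.2.1⟩
    rw [hfib]
    calc ∑ w ∈ boxN, (F.filter (fun p => p.1 = w)).card
        ≤ ∑ w ∈ boxN, 5 * Int.gcd w.1 w.2 := by
          apply Finset.sum_le_sum
          intro w hw
          simp only [hboxN, Finset.mem_filter] at hw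
          have step : (F.filter (fun p => p.1 = w)).card
              ≤ (box.filter (fun q : ℤ×ℤ => q.1 * w.2 - w.1 * q.2 = D)).card := by
            refine Finset.card_le_card_of_injOn (fun p => p.2) ?_ ?_
            · intro p hp
              simp only [hF, Finset.mem_coe, Finset.mem_filter] at hp
              obtain ⟨⟨hpbox, hpN, hpD⟩, hp1⟩ := hp
              simp only [Finset.mem_coe, Finset.mem_filter]
              refine ⟨(Finset.mem_product.mp hpbox).2, ?_⟩
              rw [hp1] at hpD
              exact hpD
            · intro p hp q hq hpq
              simp only [Finset.coe_filter, Set.mem_setOf_eq] at hp hq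
              simp only at hpq
              exact Prod.ext (hp.2.trans hq.2.symm) hpq
          refine le_trans step ?_
          have := fiber_bound N M hM D w.1 w.2 hw.2
          simpa [hbox, hbox1] using this
        _ = 5 * ∑ w ∈ boxN, Int.gcd w.1 w.2 := by rw [Finset.mul_sum]
        _ ≤ 5 * (16*M * ∑ d ∈ Finset.Icc 1 M, (M/d)) := by
            refine Nat.mul_le_mul_left 5 ?_
            have := sum_gcd_bound N M
            simpa [hboxN, hbox, hbox1] using this
        _ = 80 * M * ∑ d ∈ Finset.Icc 1 M, (M/d) := by ring
  -- Step D: real arithmetic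
  have hN0 : (0:ℝ) < N := by positivity
  have hNR : (2:ℝ) ≤ N := by exact_mod_cast hN
  have hlog2 : Real.log 2 ≤ Real.log N := Real.log_le_log (by norm_num) hNR
  have hlog2' : (0.6931471803 : ℝ) < Real.log 2 := Real.log_two_gt_d9
  have hMN : M ≤ N := by
    have h1 : M*M ≤ N*N := le_trans hM (by nlinarith)
    exact (mul_self_le_mul_self_iff (Nat.zero_le M) (Nat.zero_le N)).mpr h1
  have hlogM : Real.log M ≤ Real.log N := by
    apply Real.log_le_log (by positivity)
    exact_mod_cast hMN
  have hkey : 1 + Real.log M ≤ 3 * Real.log N := by nlinarith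
  have hlogN0 : 0 ≤ Real.log N := by nlinarith
  rw [pow_one]
  calc (Nat.card {z : GaussianInt × GaussianInt |
          (N : ℤ) < Zsqrtd.norm z.1 ∧ Zsqrtd.norm z.1 ≤ 2 * N ∧
          (N : ℤ) < Zsqrtd.norm z.2 ∧ Zsqrtd.norm z.2 ≤ 2 * N ∧
          Zsqrtd.re z.2 * Zsqrtd.im z.1 - Zsqrtd.re z.1 * Zsqrtd.im z.2 = D} : ℝ)
      ≤ (F.card : ℝ) := by exact_mod_cast hB
    _ ≤ ((80 * M * ∑ d ∈ Finset.Icc 1 M, (M/d) : ℕ) : ℝ) := by exact_mod_cast hC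
    _ = 80 * (M:ℝ) * ((∑ d ∈ Finset.Icc 1 M, (M/d) : ℕ) : ℝ) := by push_cast; ring
    _ ≤ 80 * (M:ℝ) * ((M:ℝ) * (1 + Real.log M)) := by
        refine mul_le_mul_of_nonneg_left (sum_nat_div_le M) (by positivity)
    _ ≤ 480 * N * Real.log N := by
        have hMM : (M:ℝ)*(M:ℝ) ≤ 2*(N:ℝ) := by exact_mod_cast hM
        have hM0 : (0:ℝ) ≤ M := Nat.cast_nonneg M
        have hpos : (0:ℝ) ≤ 1 + Real.log M := by
          have h1M : (1:ℝ) ≤ M := by exact_mod_cast Nat.one_le_of_lt hM2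
          have : (0:ℝ) ≤ Real.log M := Real.log_nonneg h1M
          linarith
        nlinarith [mul_nonneg hM0 hM0, mul_le_mul_of_nonneg_right hMM hpos]
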